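/- For every L_A-sentence φ there exist integers n, k ≥ 1 such that X_φ is a union of ∼_(n,k)-equivalence classes; that is, for all configurations x, y : ℤ × ℤ → A with x ∼_(n,k) y, one has M_x ⊨ φ if and only if M_y ⊨ φ. -/

import Mathlib

open FirstOrder

/-- The four unary function symbols East, West, North, South. -/
inductive Dir : Type
  | east | west | north | south

/-- The first-order language `L_A`: four unary function symbols and a unary
relation symbol `P_c` for each colour `c ∈ A`. -/
def LA (A : Type) : FirstOrder.Language where
  Functions := fun n => match n with
    | 1 => Dir
    | _ => Empty
  Relations := fun n => match n with
    | 1 => A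
    | _ => Empty

/-- The `L_A`-structure `M_x` on `ℤ × ℤ` associated to a configuration `x`. -/
def struc (A : Type) (x : ℤ × ℤ → A) : (LA A).Structure (ℤ × ℤ) where
  funMap {n} f v :=
    match n, f, v with
    | 1, Dir.east, v => ((v 0).1 + 1, (v 0).2)
    | 1, Dir.west, v => ((v 0).1 - 1, (v 0).2)
    | 1, Dir.north, v => ((v 0).1, (v 0).2 + 1)
    | 1, Dir.south, v => ((v 0).1, (v 0).2 - 1)
  RelMap {n} r v :=
    match n, r, v with
    | 1, c, v => x (v 0) = c

/-- `M_x ⊨ φ`. -/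
def Models {A : Type} (x : ℤ × ℤ → A) (φ : (LA A).Sentence) : Prop :=
  @FirstOrder.Language.Sentence.Realize (LA A) (ℤ × ℤ) (struc A x) φ

/-- The square `[0, n−1]²` in `ℤ × ℤ`. -/
def sqN (n : ℕ) : Set (ℤ × ℤ) :=
  {p | 0 ≤ p.1 ∧ p.1 < (n : ℤ) ∧ 0 ≤ p.2 ∧ p.2 < (n : ℤ)}

/-- The set of positions at which the `n × n` pattern `P` (i.e. the restriction
of `P` to `[0, n−1]²`) occurs in the configuration `x`. -/
def OccSet {A : Type} (x P : ℤ × ℤ → A) (n : ℕ) : Set (ℤ × ℤ) :=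
  {v | ∀ u ∈ sqN n, P u = x (u + v)}

/-- The `n × n` pattern `P` occurs at exactly `t` positions in `x`. -/
def ExactOcc {A : Type} (x P : ℤ × ℤ → A) (n t : ℕ) : Prop :=
  (OccSet x P n).Finite ∧ (OccSet x P n).ncard = t

/-- `x ∼_(n,k) y`: every `n × n` pattern occurs exactly `t` times in `x` iff it
occurs exactly `t` times in `y`, for every `t < k`. -/
def EquivNK {A : Type} (n k : ℕ) (x y : ℤ × ℤ → A) : Prop :=
  ∀ P : ℤ × ℤ → A, ∀ t < k, (ExactOcc x P n t ↔ ExactOcc y P n t)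

/-! ### Auxiliary definitions -/

/-- `v` and `w` are within L∞ distance `r`. -/
def nr (r : ℕ) (v w : ℤ × ℤ) : Prop :=
  v.1 - w.1 ≤ (r : ℤ) ∧ w.1 - v.1 ≤ (r : ℤ) ∧ v.2 - w.2 ≤ (r : ℤ) ∧ w.2 - v.2 ≤ (r : ℤ)

/-- `u` lies in the centered square of radius `r`. -/
def inSq (r : ℕ) (u : ℤ × ℤ) : Prop :=
  -(r : ℤ) ≤ u.1 ∧ u.1 ≤ (r : ℤ) ∧ -(r : ℤ) ≤ u.2 ∧ u.2 ≤ (r : ℤ)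

/-- The radius-`r` square of `x` at `v` equals the radius-`r` square of `y` at `w`. -/
def tE {A : Type} (r : ℕ) (x : ℤ × ℤ → A) (v : ℤ × ℤ) (y : ℤ × ℤ → A) (w : ℤ × ℤ) : Prop :=
  ∀ u : ℤ × ℤ, inSq r u → x (v + u) = y (w + u)

/-- The radius-`r` centered type of `x` at `v` is `τ`. -/
def cT {A : Type} (r : ℕ) (x : ℤ × ℤ → A) (v : ℤ × ℤ) (τ : ℤ × ℤ → A) : Prop :=
  ∀ u : ℤ × ℤ, inSq r u → x (v + u) = τ u

/-- The Ehrenfeucht–Fraïssé invariant. -/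
def Good {A : Type} (r : ℕ) (x y : ℤ × ℤ → A) {m : ℕ} (a b : Fin m → ℤ × ℤ) : Prop :=
  (∀ i, tE r x (a i) y (b i)) ∧
  ∀ i j, a i - a j = b i - b j ∨ (¬ nr (2 * r) (a i) (a j) ∧ ¬ nr (2 * r) (b i) (b j))

def Big (k : ℕ) (S : Set (ℤ × ℤ)) : Prop := S.Finite → k ≤ S.ncard

def Mtch (k : ℕ) (S T : Set (ℤ × ℤ)) : Prop :=
  (S.Finite ∧ T.Finite ∧ S.ncard = T.ncard) ∨ (Big k S ∧ Big k T)

lemma big_mono {k : ℕ} {S T : Set (ℤ × ℤ)} (h : S ⊆ T) (hS : Big k S) : Big k T :=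
  fun hT => le_trans (hS (hT.subset h)) (Set.ncard_le_ncard h hT)

lemma mtch_empty {k : ℕ} : Mtch k ∅ ∅ := Or.inl ⟨Set.finite_empty, Set.finite_empty, rfl⟩

lemma mtch_union {k : ℕ} {S S' T T' : Set (ℤ × ℤ)} (hS : Disjoint S S') (hT : Disjoint T T')
    (h1 : Mtch k S T) (h2 : Mtch k S' T') : Mtch k (S ∪ S') (T ∪ T') := by
  rcases h1 with ⟨f1, f2, e⟩ | ⟨b1, b2⟩
  · rcases h2 with ⟨f1', f2', e'⟩ | ⟨b1', b2'⟩
    · exact Or.inl ⟨f1.union f1', f2.union f2', by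
        rw [Set.ncard_union_eq hS f1 f1', Set.ncard_union_eq hT f2 f2', e, e']⟩
    · exact Or.inr ⟨big_mono Set.subset_union_right b1', big_mono Set.subset_union_right b2'⟩
  · exact Or.inr ⟨big_mono Set.subset_union_left b1, big_mono Set.subset_union_left b2⟩

lemma mtch_biUnion {k : ℕ} {ι : Type} [DecidableEq ι] (s : Finset ι) (S T : ι → Set (ℤ × ℤ))
    (hS : ∀ i j, i ≠ j → Disjoint (S i) (S j)) (hT : ∀ i j, i ≠ j → Disjoint (T i) (T j))
    (h : ∀ i, Mtch k (S i) (T i)) : Mtch k (⋃ i ∈ s, S i) (⋃ i ∈ s, T i) := by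
  classical
  induction s using Finset.induction with
  | empty => simpa using mtch_empty
  | @insert a s ha ih =>
      rw [Finset.set_biUnion_insert, Finset.set_biUnion_insert]
      refine mtch_union ?_ ?_ (h a) ih
      · simp only [Set.disjoint_iUnion_right]
        exact fun i hi => hS a i (fun h' => ha (h' ▸ hi))
      · simp only [Set.disjoint_iUnion_right]
        exact fun i hi => hT a i (fun h' => ha (h' ▸ hi))

lemma mtch_image {k : ℕ} {S T : Set (ℤ × ℤ)} (f : ℤ × ℤ → ℤ × ℤ) (hf : Function.Injective f)
    (h : Mtch k S T) : Mtch k (f '' S) (f '' T) := by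
  rcases h with ⟨f1, f2, e⟩ | ⟨b1, b2⟩
  · exact Or.inl ⟨f1.image f, f2.image f, by
      rw [Set.ncard_image_of_injective _ hf, Set.ncard_image_of_injective _ hf, e]⟩
  · refine Or.inr ⟨fun hfin => ?_, fun hfin => ?_⟩
    · rw [Set.ncard_image_of_injective _ hf]
      exact b1 (hfin.of_finite_image hf.injOn)
    · rw [Set.ncard_image_of_injective _ hf]
      exact b2 (hfin.of_finite_image hf.injOn)

lemma mtch_occ {A : Type} {n k : ℕ} {x y : ℤ × ℤ → A} (hxy : EquivNK n k x y) (P : ℤ × ℤ → A) :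
    Mtch k (OccSet x P n) (OccSet y P n) := by
  by_cases hx : (OccSet x P n).Finite
  · by_cases hlt : (OccSet x P n).ncard < k
    · have h2 := (hxy P _ hlt).mp ⟨hx, rfl⟩
      exact Or.inl ⟨hx, h2.1, h2.2.symm⟩
    · refine Or.inr ⟨fun _ => not_lt.mp hlt, fun hfy => ?_⟩
      by_contra hyk
      push_neg at hyk
      have h2 := (hxy P _ hyk).mpr ⟨hfy, rfl⟩
      exact hlt (h2.2 ▸ hyk)
  · refine Or.inr ⟨fun hfx => absurd hfx hx, fun hfy => ?_⟩
    by_contra hyk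
    push_neg at hyk
    exact hx ((hxy P _ hyk).mpr ⟨hfy, rfl⟩).1

lemma mtch_cT_top {A : Type} {R k : ℕ} {x y : ℤ × ℤ → A} (hxy : EquivNK (2 * R + 1) k x y)
    (σ : ℤ × ℤ → A) : Mtch k {v | cT R x v σ} {v | cT R y v σ} := by
  have himg : ∀ z : ℤ × ℤ → A, {v | cT R z v σ} =
      (fun w => w + ((R : ℤ), (R : ℤ))) '' OccSet z (fun u => σ (u - ((R : ℤ), (R : ℤ)))) (2 * R + 1) := by
    intro z
    ext v
    constructor
    · intro hv
      refine ⟨v - ((R : ℤ), (R : ℤ)), fun u hu => ?_, by ring⟩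
      obtain ⟨h1, h2, h3, h4⟩ := hu
      have hb : inSq R (u - ((R : ℤ), (R : ℤ))) := by
        constructor <;> [skip; constructor] <;> [skip; skip; constructor] <;>
          simp only [Prod.fst_sub, Prod.snd_sub] <;> push_cast at h2 h4 ⊢ <;> omega
      have := hv _ hb
      rw [show v + (u - ((R : ℤ), (R : ℤ))) = u + (v - ((R : ℤ), (R : ℤ))) by ring] at this
      exact this.symm
    · rintro ⟨w, hw, rfl⟩
      intro u hu
      obtain ⟨h1, h2, h3, h4⟩ := hu
      have hm : (u + ((R : ℤ), (R : ℤ))) ∈ sqN (2 * R + 1) := by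
        refine ⟨?_, ?_, ?_, ?_⟩ <;> simp only [Prod.fst_add, Prod.snd_add] <;> push_cast <;> omega
      have := hw _ hm
      simp only at this
      rw [show u + ((R : ℤ), (R : ℤ)) + w = w + ((R : ℤ), (R : ℤ)) + u by ring,
        show u + ((R : ℤ), (R : ℤ)) - ((R : ℤ), (R : ℤ)) = u by ring] at this
      exact this.symm
  rw [himg x, himg y]
  exact mtch_image _ (add_left_injective _) (mtch_occ hxy _)

/-! ### Small-radius type counting -/

lemma mtch_cT_small {A : Type} [Fintype A] [Nonempty A] {R k r : ℕ} (hr : r ≤ R)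
    {x y : ℤ × ℤ → A} (hxy : EquivNK (2 * R + 1) k x y) (τ : ℤ × ℤ → A) :
    Mtch k {v | cT r x v τ} {v | cT r y v τ} := by
  classical
  set Q : Finset (ℤ × ℤ) := Finset.Icc ((-(R : ℤ), -(R : ℤ))) (((R : ℤ), (R : ℤ))) with hQ
  have hmemQ : ∀ u : ℤ × ℤ, u ∈ Q ↔ inSq R u := by
    intro u
    simp [hQ, Finset.mem_Icc, Prod.le_def, inSq]
    tauto
  set dec : (Q → A) → ℤ × ℤ → A :=
    fun g u => if h : u ∈ Q then g ⟨u, h⟩ else Classical.arbitrary A with hdec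
  have hdecQ : ∀ (g : Q → A) (q : Q), dec g q.1 = g q := by
    intro g q
    rw [hdec]
    simp only [q.2, dif_pos]
  set cmp : (Q → A) → Prop := fun g => ∀ u : ℤ × ℤ, inSq r u → dec g u = τ u with hcmp
  set S : (Q → A) → Set (ℤ × ℤ) := fun g =>
    if cmp g then {v | cT R x v (dec g)} else ∅ with hSdef
  set T : (Q → A) → Set (ℤ × ℤ) := fun g =>
    if cmp g then {v | cT R y v (dec g)} else ∅ with hTdef
  have hmemS : ∀ (z : ℤ × ℤ → A) (g : Q → A) (v : ℤ × ℤ),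
      (v ∈ (if cmp g then {v | cT R z v (dec g)} else (∅ : Set (ℤ × ℤ)))) ↔
      (cmp g ∧ cT R z v (dec g)) := by
    intro z g v
    by_cases hc : cmp g
    · rw [if_pos hc]; exact ⟨fun h => ⟨hc, h⟩, And.right⟩
    · rw [if_neg hc]; simp [hc]
  have hdisj : ∀ (z : ℤ × ℤ → A) (W : (Q → A) → Set (ℤ × ℤ)),
      (∀ g v, v ∈ W g ↔ (cmp g ∧ cT R z v (dec g))) →
      ∀ g g', g ≠ g' → Disjoint (W g) (W g') := by
    intro z W hW g g' hgg'
    rw [Set.disjoint_left]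
    intro v hv hv'
    obtain ⟨-, hv⟩ := (hW g v).mp hv
    obtain ⟨-, hv'⟩ := (hW g' v).mp hv'
    obtain ⟨q, hq⟩ := Function.ne_iff.mp hgg'
    apply hq
    have h1 := hv q.1 ((hmemQ q.1).mp q.2)
    have h2 := hv' q.1 ((hmemQ q.1).mp q.2)
    rw [hdecQ g q] at h1
    rw [hdecQ g' q] at h2
    exact h1.symm.trans h2
  have hcover : ∀ (z : ℤ × ℤ → A) (W : (Q → A) → Set (ℤ × ℤ)),
      (∀ g v, v ∈ W g ↔ (cmp g ∧ cT R z v (dec g))) →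
      {v | cT r z v τ} = ⋃ g ∈ (Finset.univ : Finset (Q → A)), W g := by
    intro z W hW
    ext v
    simp only [Set.mem_iUnion, Set.mem_setOf_eq, Finset.mem_univ, exists_prop, true_and]
    constructor
    · intro hv
      refine ⟨fun q => z (v + q.1), ?_⟩
      rw [hW]
      have hdg : ∀ u : ℤ × ℤ, inSq R u → dec (fun q => z (v + q.1)) u = z (v + u) := by
        intro u hu
        exact hdecQ (fun q => z (v + q.1)) ⟨u, (hmemQ u).mpr hu⟩
      constructor
      · intro u hu
        have huR : inSq R u := by
          obtain ⟨h1, h2, h3, h4⟩ := hu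
          refine ⟨?_, ?_, ?_, ?_⟩ <;> push_cast <;> omega
        rw [hdg u huR]
        exact hv u hu
      · intro u hu
        rw [hdg u hu]
    · rintro ⟨g, hg⟩
      rw [hW] at hg
      obtain ⟨hcomp, hg⟩ := hg
      intro u hu
      have huR : inSq R u := by
        obtain ⟨h1, h2, h3, h4⟩ := hu
        refine ⟨?_, ?_, ?_, ?_⟩ <;> push_cast <;> omega
      rw [hg u huR]
      exact hcomp u hu
  rw [hcover x S (hmemS x), hcover y T (hmemS y)]
  refine mtch_biUnion _ _ _ (hdisj x S (hmemS x)) (hdisj y T (hmemS y)) ?_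
  intro g
  by_cases hc : cmp g
  · rw [hSdef, hTdef]
    simp only [if_pos hc]
    exact mtch_cT_top hxy _
  · rw [hSdef, hTdef]
    simp only [if_neg hc]
    exact mtch_empty

/-! ### Near sets -/

lemma nr_iff {r : ℕ} {v w : ℤ × ℤ} : nr r v w ↔
    (v.1 - w.1 ≤ (r : ℤ) ∧ w.1 - v.1 ≤ (r : ℤ) ∧ v.2 - w.2 ≤ (r : ℤ) ∧ w.2 - v.2 ≤ (r : ℤ)) :=
  Iff.rfl

lemma inSq_iff {r : ℕ} {u : ℤ × ℤ} : inSq r u ↔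
    (-(r : ℤ) ≤ u.1 ∧ u.1 ≤ (r : ℤ) ∧ -(r : ℤ) ≤ u.2 ∧ u.2 ≤ (r : ℤ)) :=
  Iff.rfl

lemma sub_eq_comp {p q s t : ℤ × ℤ} : p - q = s - t ↔
    (p.1 - q.1 = s.1 - t.1 ∧ p.2 - q.2 = s.2 - t.2) := by
  rw [Prod.ext_iff]; simp

lemma nr_mono {r1 r2 : ℕ} {v w : ℤ × ℤ} (h : r1 ≤ r2) (hn : nr r1 v w) : nr r2 v w := by
  rw [nr_iff] at *; omega

lemma nr_symm {r : ℕ} {v w : ℤ × ℤ} (hn : nr r v w) : nr r w v := by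
  rw [nr_iff] at *; omega

lemma inSq_mono {r1 r2 : ℕ} {u : ℤ × ℤ} (h : r1 ≤ r2) (hu : inSq r1 u) : inSq r2 u := by
  rw [inSq_iff] at *; omega

lemma tE_mono {A : Type} {r1 r2 : ℕ} {x y : ℤ × ℤ → A} {v w : ℤ × ℤ} (h : r1 ≤ r2)
    (ht : tE r2 x v y w) : tE r1 x v y w := fun u hu => ht u (inSq_mono h hu)

lemma tE_symm {A : Type} {r : ℕ} {x y : ℤ × ℤ → A} {v w : ℤ × ℤ}
    (ht : tE r x v y w) : tE r y w x v := fun u hu => (ht u hu).symm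

lemma good_symm {A : Type} {r : ℕ} {x y : ℤ × ℤ → A} {m : ℕ} {a b : Fin m → ℤ × ℤ}
    (h : Good r x y a b) : Good r y x b a :=
  ⟨fun i => tE_symm (h.1 i), fun i j => (h.2 i j).elim (fun e => Or.inl e.symm)
    (fun e => Or.inr ⟨e.2, e.1⟩)⟩

lemma equivnk_symm {A : Type} {n k : ℕ} {x y : ℤ × ℤ → A} (h : EquivNK n k x y) :
    EquivNK n k y x := fun P t ht => (h P t ht).symm

lemma ball_card (ρ : ℕ) (w : ℤ × ℤ) :
    (Finset.Icc (w - ((ρ : ℤ), (ρ : ℤ))) (w + ((ρ : ℤ), (ρ : ℤ)))).card = (2 * ρ + 1) ^ 2 := by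
  rw [Finset.card_Icc_prod]
  simp only [Prod.fst_sub, Prod.snd_sub, Prod.fst_add, Prod.snd_add, Int.card_Icc]
  have h1 : (w.1 + ((ρ : ℤ), (ρ : ℤ)).1 + 1 - (w.1 - ((ρ : ℤ), (ρ : ℤ)).1)).toNat = 2 * ρ + 1 := by
    simp only []; omega
  have h2 : (w.2 + ((ρ : ℤ), (ρ : ℤ)).2 + 1 - (w.2 - ((ρ : ℤ), (ρ : ℤ)).2)).toNat = 2 * ρ + 1 := by
    simp only []; omega
  rw [h1, h2]; ring

lemma nearSet_spec {m : ℕ} (ρ : ℕ) (p : Fin m → ℤ × ℤ) :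
    {v : ℤ × ℤ | ∃ j, nr ρ v (p j)}.Finite ∧
    {v : ℤ × ℤ | ∃ j, nr ρ v (p j)}.ncard ≤ m * (2 * ρ + 1) ^ 2 := by
  classical
  have hEq : {v : ℤ × ℤ | ∃ j, nr ρ v (p j)} =
      ↑(Finset.univ.biUnion fun j : Fin m =>
        Finset.Icc (p j - ((ρ : ℤ), (ρ : ℤ))) (p j + ((ρ : ℤ), (ρ : ℤ)))) := by
    ext v
    simp only [Set.mem_setOf_eq, Finset.coe_biUnion, Finset.coe_univ, Set.mem_univ,
      Set.iUnion_true, Set.mem_iUnion, Finset.mem_coe, Finset.mem_Icc, Prod.le_def,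
      Prod.fst_sub, Prod.snd_sub, Prod.fst_add, Prod.snd_add]
    refine exists_congr fun j => ?_
    rw [nr_iff]
    constructor <;> intro h <;> [constructor; skip] <;> omega
  rw [hEq]
  refine ⟨Finset.finite_toSet _, ?_⟩
  rw [Set.ncard_coe_finset]
  refine le_trans Finset.card_biUnion_le ?_
  refine le_trans (Finset.sum_le_card_nsmul _ _ ((2 * ρ + 1) ^ 2)
    fun j _ => le_of_eq (ball_card ρ (p j))) ?_
  simp [Finset.card_univ, smul_eq_mul]

/-! ### The extension lemma -/

lemma extend {A : Type} [Fintype A] [Nonempty A] {R k r r' : ℕ} (hr'1 : 1 ≤ r')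
    (h3 : 3 * r' ≤ r) (hrR : r ≤ R) {m : ℕ} (hk : m * (2 * (2 * r') + 1) ^ 2 < k)
    {x y : ℤ × ℤ → A} (hxy : EquivNK (2 * R + 1) k x y)
    {a b : Fin m → ℤ × ℤ} (hG : Good r x y a b) (c : ℤ × ℤ) :
    ∃ d, Good r' x y (Fin.snoc a c) (Fin.snoc b d) := by
  classical
  obtain ⟨hG1, hG2⟩ := hG
  have hdiffA : ∀ i j, nr (2 * r) (a i) (a j) → a i - a j = b i - b j := by
    intro i j hn
    rcases hG2 i j with h | ⟨h1, h2⟩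
    exacts [h, absurd hn h1]
  have hdiffB : ∀ i j, nr (2 * r) (b i) (b j) → a i - a j = b i - b j := by
    intro i j hn
    rcases hG2 i j with h | ⟨h1, h2⟩
    exacts [h, absurd hn h2]
  by_cases hnear : ∃ j, nr (2 * r') c (a j)
  · obtain ⟨j, hj⟩ := hnear
    set d : ℤ × ℤ := b j + (c - a j) with hd
    have hpairnew : ∀ i : Fin m,
        c - a i = d - b i ∨ (¬ nr (2 * r') c (a i) ∧ ¬ nr (2 * r') d (b i)) := by
      intro i
      by_cases hci : nr (2 * r') c (a i)
      · left
        have hn : nr (2 * r) (a j) (a i) := by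
          rw [nr_iff] at *
          obtain ⟨h1, h2, h3', h4⟩ := hj; obtain ⟨h5, h6, h7, h8⟩ := hci
          push_cast at *; omega
        have heq := hdiffA j i hn
        rw [sub_eq_comp] at heq ⊢
        simp only [hd, Prod.fst_add, Prod.snd_add, Prod.fst_sub, Prod.snd_sub] at *
        omega
      · right
        refine ⟨hci, fun hcon => ?_⟩
        rcases hG2 j i with heq | ⟨hfar1, hfar2⟩
        · apply hci
          rw [sub_eq_comp] at heq
          rw [nr_iff] at hcon ⊢
          simp only [hd, Prod.fst_add, Prod.snd_add, Prod.fst_sub, Prod.snd_sub] at *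
          omega
        · apply hfar2
          rw [nr_iff] at hj hcon ⊢
          simp only [hd, Prod.fst_add, Prod.snd_add, Prod.fst_sub, Prod.snd_sub] at *
          omega
    refine ⟨d, ?_, ?_⟩
    · intro i
      refine Fin.lastCases ?_ (fun i0 => ?_) i
      · simp only [Fin.snoc_last]
        intro u hu
        have hu' : inSq r (c - a j + u) := by
          rw [inSq_iff] at hu ⊢
          rw [nr_iff] at hj
          simp only [Prod.fst_add, Prod.snd_add, Prod.fst_sub, Prod.snd_sub] at *
          push_cast at *; omega
        have h1 := hG1 j _ hu'
        rw [show a j + (c - a j + u) = c + u by ring] at h1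
        rw [show b j + (c - a j + u) = d + u by rw [hd]; ring] at h1
        exact h1
      · simp only [Fin.snoc_castSucc]
        exact tE_mono (by omega) (hG1 i0)
    · intro i i'
      refine Fin.lastCases ?_ (fun i0 => ?_) i
      · refine Fin.lastCases ?_ (fun i1 => ?_) i'
        · simp only [Fin.snoc_last]
          left; simp
        · simp only [Fin.snoc_last, Fin.snoc_castSucc]
          rcases hpairnew i1 with h | ⟨h1, h2⟩
          · exact Or.inl h
          · exact Or.inr ⟨h1, h2⟩
      · refine Fin.lastCases ?_ (fun i1 => ?_) i'
        · simp only [Fin.snoc_last, Fin.snoc_castSucc]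
          rcases hpairnew i0 with h | ⟨h1, h2⟩
          · left
            rw [sub_eq_comp] at h ⊢
            omega
          · exact Or.inr ⟨fun hn => h1 (nr_symm hn), fun hn => h2 (nr_symm hn)⟩
        · simp only [Fin.snoc_castSucc]
          rcases hG2 i0 i1 with h | ⟨h1, h2⟩
          · exact Or.inl h
          · exact Or.inr ⟨fun hn => h1 (nr_mono (by omega) hn),
              fun hn => h2 (nr_mono (by omega) hn)⟩
  · have hfar : ∀ j, ¬ nr (2 * r') c (a j) := fun j hj => hnear ⟨j, hj⟩
    set τ : ℤ × ℤ → A := fun u => x (c + u) with hτ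
    set Sx : Set (ℤ × ℤ) := {v | cT r' x v τ} with hSx
    set Sy : Set (ℤ × ℤ) := {v | cT r' y v τ} with hSy
    have hM : Mtch k Sx Sy := mtch_cT_small (show r' ≤ R by omega) hxy τ
    set NA : Set (ℤ × ℤ) := {v | ∃ j, nr (2 * r') v (a j)} with hNA
    set NB : Set (ℤ × ℤ) := {v | ∃ j, nr (2 * r') v (b j)} with hNB
    obtain ⟨hNAfin, hNAcard⟩ := nearSet_spec (2 * r') a
    obtain ⟨hNBfin, hNBcard⟩ := nearSet_spec (2 * r') b
    rw [← hNA] at hNAfin hNAcard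
    rw [← hNB] at hNBfin hNBcard
    set F : ℤ × ℤ → ℤ × ℤ :=
      fun v => if h : ∃ j, nr (2 * r') v (a j) then v + (b h.choose - a h.choose) else v with hF
    have hwd : ∀ (v : ℤ × ℤ) (j : Fin m), nr (2 * r') v (a j) → F v = v + (b j - a j) := by
      intro v j hvj
      have hex : ∃ j, nr (2 * r') v (a j) := ⟨j, hvj⟩
      rw [hF]; simp only [dif_pos hex]
      have hj' := hex.choose_spec
      have hn : nr (2 * r) (a hex.choose) (a j) := by
        rw [nr_iff] at *; push_cast at *; omega
      have heq := hdiffA hex.choose j hn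
      rw [sub_eq_comp] at heq
      apply Prod.ext <;>
        simp only [Prod.fst_add, Prod.snd_add, Prod.fst_sub, Prod.snd_sub] at * <;> omega
    have hmaps : ∀ v ∈ Sx ∩ NA, F v ∈ Sy ∩ NB := by
      rintro v ⟨hvS, j, hvj⟩
      rw [hwd v j hvj]
      constructor
      · intro u hu
        have hu' : inSq r (v - a j + u) := by
          rw [inSq_iff] at hu ⊢; rw [nr_iff] at hvj
          simp only [Prod.fst_add, Prod.snd_add, Prod.fst_sub, Prod.snd_sub] at *
          push_cast at *; omega
        have h1 := hG1 j _ hu'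
        rw [show a j + (v - a j + u) = v + u by ring] at h1
        rw [show b j + (v - a j + u) = v + (b j - a j) + u by ring] at h1
        rw [← h1]
        exact hvS u hu
      · refine ⟨j, ?_⟩
        rw [nr_iff] at hvj ⊢
        simp only [Prod.fst_add, Prod.snd_add, Prod.fst_sub, Prod.snd_sub] at *
        omega
    have hinj : Set.InjOn F (Sx ∩ NA) := by
      rintro v ⟨-, j, hvj⟩ w ⟨-, j', hwj⟩ hFeq
      rw [hwd v j hvj, hwd w j' hwj] at hFeq
      have hn : nr (2 * r) (b j) (b j') := by
        rw [nr_iff] at hvj hwj ⊢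
        rw [Prod.ext_iff] at hFeq
        simp only [Prod.fst_add, Prod.snd_add, Prod.fst_sub, Prod.snd_sub] at *
        push_cast at *; omega
      have heq := hdiffB j j' hn
      rw [sub_eq_comp] at heq
      rw [Prod.ext_iff] at hFeq
      apply Prod.ext <;>
        simp only [Prod.fst_add, Prod.snd_add, Prod.fst_sub, Prod.snd_sub] at * <;> omega
    have hsurj : ∀ w ∈ Sy ∩ NB, ∃ v ∈ Sx ∩ NA, F v = w := by
      rintro w ⟨hwS, j, hwj⟩
      have hvj : nr (2 * r') (w + (a j - b j)) (a j) := by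
        rw [nr_iff] at hwj ⊢
        simp only [Prod.fst_add, Prod.snd_add, Prod.fst_sub, Prod.snd_sub] at *
        omega
      refine ⟨w + (a j - b j), ⟨?_, ⟨j, hvj⟩⟩, ?_⟩
      · intro u hu
        have hu' : inSq r (w - b j + u) := by
          rw [inSq_iff] at hu ⊢; rw [nr_iff] at hwj
          simp only [Prod.fst_add, Prod.snd_add, Prod.fst_sub, Prod.snd_sub] at *
          push_cast at *; omega
        have h1 := hG1 j _ hu'
        rw [show a j + (w - b j + u) = w + (a j - b j) + u by ring] at h1
        rw [show b j + (w - b j + u) = w + u by ring] at h1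
        rw [h1]
        exact hwS u hu
      · rw [hwd _ j hvj]
        ring
    have himg : F '' (Sx ∩ NA) = Sy ∩ NB := by
      apply Set.Subset.antisymm
      · rintro _ ⟨v, hv, rfl⟩
        exact hmaps v hv
      · intro w hw
        obtain ⟨v, hv, he⟩ := hsurj w hw
        exact ⟨v, hv, he⟩
    have hNxfin : (Sx ∩ NA).Finite := hNAfin.subset Set.inter_subset_right
    have hNyfin : (Sy ∩ NB).Finite := hNBfin.subset Set.inter_subset_right
    have hcnt : (Sx ∩ NA).ncard = (Sy ∩ NB).ncard := by
      rw [← himg, Set.ncard_image_of_injOn hinj]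
    have hcS : c ∈ Sx := by
      intro u hu; rfl
    have hcN : c ∉ NA := fun ⟨j, hj⟩ => hfar j hj
    have hex : (Sy \ NB).Nonempty := by
      rcases hM with ⟨hfx, hfy, he⟩ | ⟨hbx, hby⟩
      · have h1 : (Sx \ NA).Nonempty := ⟨c, hcS, hcN⟩
        have e1 : Sx \ (Sx ∩ NA) = Sx \ NA := Set.diff_self_inter
        have e2 : Sy \ (Sy ∩ NB) = Sy \ NB := Set.diff_self_inter
        have h2 : (Sx \ (Sx ∩ NA)).ncard = Sx.ncard - (Sx ∩ NA).ncard :=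
          Set.ncard_diff Set.inter_subset_left hNxfin
        have h3 : (Sy \ (Sy ∩ NB)).ncard = Sy.ncard - (Sy ∩ NB).ncard :=
          Set.ncard_diff Set.inter_subset_left hNyfin
        have h4 : 0 < (Sx \ NA).ncard := (Set.ncard_pos hfx.diff).mpr h1
        have h5 : 0 < (Sy \ NB).ncard := by
          rw [← e2, h3, ← hcnt, ← he]
          rw [← e1, h2] at h4
          omega
        exact Set.nonempty_of_ncard_ne_zero (by omega)
      · by_cases hSyfin : Sy.Finite
        · have hky := hby hSyfin
          have h3 : (Sy \ (Sy ∩ NB)).ncard = Sy.ncard - (Sy ∩ NB).ncard :=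
            Set.ncard_diff Set.inter_subset_left hNyfin
          rw [Set.diff_self_inter] at h3
          have h6 : (Sy ∩ NB).ncard ≤ NB.ncard :=
            Set.ncard_le_ncard Set.inter_subset_right hNBfin
          exact Set.nonempty_of_ncard_ne_zero (by omega)
        · have : (Sy \ NB).Infinite := Set.Infinite.diff hSyfin hNBfin
          exact this.nonempty
    obtain ⟨d, hdS, hdN⟩ := hex
    have hdN' : ∀ j, ¬ nr (2 * r') d (b j) := fun j hj => hdN ⟨j, hj⟩
    refine ⟨d, ?_, ?_⟩
    · intro i
      refine Fin.lastCases ?_ (fun i0 => ?_) i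
      · simp only [Fin.snoc_last]
        intro u hu
        exact (hcS u hu).trans (hdS u hu).symm
      · simp only [Fin.snoc_castSucc]
        exact tE_mono (by omega) (hG1 i0)
    · intro i i'
      refine Fin.lastCases ?_ (fun i0 => ?_) i
      · refine Fin.lastCases ?_ (fun i1 => ?_) i'
        · simp only [Fin.snoc_last]; left; simp
        · simp only [Fin.snoc_last, Fin.snoc_castSucc]
          exact Or.inr ⟨hfar i1, hdN' i1⟩
      · refine Fin.lastCases ?_ (fun i1 => ?_) i'
        · simp only [Fin.snoc_last, Fin.snoc_castSucc]
          exact Or.inr ⟨fun hn => hfar i0 (nr_symm hn), fun hn => hdN' i0 (nr_symm hn)⟩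
        · simp only [Fin.snoc_castSucc]
          rcases hG2 i0 i1 with h | ⟨h1, h2⟩
          · exact Or.inl h
          · exact Or.inr ⟨fun hn => h1 (nr_mono (by omega) hn),
              fun hn => h2 (nr_mono (by omega) hn)⟩

/-! ### Model theory: terms and radius -/

open FirstOrder.Language in
def td {A : Type} {α : Type} : (LA A).Term α → ℕ
  | .var _ => 0
  | .func _ ts => (Finset.univ.sup fun i => td (ts i)) + 1

open FirstOrder.Language in
def rad {A : Type} : ∀ {m : ℕ}, (LA A).BoundedFormula Empty m → ℕ
  | _, .falsum => 1
  | _, .equal t₁ t₂ => max (td t₁) (td t₂) + 1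
  | _, .rel _ ts => (Finset.univ.sup fun i => td (ts i)) + 1
  | _, .imp f g => max (rad f) (rad g)
  | _, .all f => 3 * rad f

open FirstOrder.Language in
lemma rad_pos {A : Type} {m : ℕ} (ψ : (LA A).BoundedFormula Empty m) : 1 ≤ rad ψ := by
  induction ψ with
  | falsum => simp [rad]
  | equal t₁ t₂ => simp [rad]
  | rel _ _ => simp [rad]
  | imp f g ihf ihg => simp only [rad]; omega
  | all f ihf => simp only [rad]; omega

open FirstOrder.Language in
lemma term_shape {A : Type} {n : ℕ} (t : (LA A).Term (Empty ⊕ Fin n)) :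
    ∃ (i : Fin n) (o : ℤ × ℤ), -(td t : ℤ) ≤ o.1 ∧ o.1 ≤ td t ∧ -(td t : ℤ) ≤ o.2 ∧ o.2 ≤ td t ∧
      ∀ (x : ℤ × ℤ → A) (w : Empty ⊕ Fin n → ℤ × ℤ),
        @Term.realize (LA A) (ℤ × ℤ) (struc A x) _ w t = w (Sum.inr i) + o := by
  induction t with
  | var v =>
      rcases v with e | i
      · exact e.elim
      · exact ⟨i, (0, 0), by simp, by simp, by simp, by simp, fun x w => by simp [Term.realize]⟩
  | func f ts ih =>
      rename_i l
      revert f ts ih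
      match l with
      | 0 => intro f _ _; exact Empty.elim f
      | (l + 2) => intro f _ _; exact Empty.elim f
      | 1 =>
        intro f ts ih
        obtain ⟨i, o, h1, h2, h3, h4, h5⟩ := ih 0
        have hle : td (ts 0) ≤ Finset.univ.sup (fun i => td (ts i)) :=
          Finset.le_sup (f := fun i => td (ts i)) (Finset.mem_univ (0 : Fin 1))
        have htd : td (Term.func f ts) = (Finset.univ.sup fun i => td (ts i)) + 1 := rfl
        cases f with
        | east =>
            refine ⟨i, o + (1, 0), ?_, ?_, ?_, ?_, fun x w => ?_⟩
            · rw [htd]; simp only [Prod.fst_add]; push_cast; omega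
            · rw [htd]; simp only [Prod.fst_add]; push_cast; omega
            · rw [htd]; simp only [Prod.snd_add]; push_cast; omega
            · rw [htd]; simp only [Prod.snd_add]; push_cast; omega
            · have e1 : @Term.realize (LA A) (ℤ × ℤ) (struc A x) _ w (@Term.func (LA A) _ 1 Dir.east ts) =
                ((@Term.realize (LA A) (ℤ × ℤ) (struc A x) _ w (ts 0)).1 + 1,
                 (@Term.realize (LA A) (ℤ × ℤ) (struc A x) _ w (ts 0)).2) := rfl
              rw [e1, h5 x w]
              apply Prod.ext <;> simp <;> ring
        | west =>
            refine ⟨i, o + (-1, 0), ?_, ?_, ?_, ?_, fun x w => ?_⟩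
            · rw [htd]; simp only [Prod.fst_add]; push_cast; omega
            · rw [htd]; simp only [Prod.fst_add]; push_cast; omega
            · rw [htd]; simp only [Prod.snd_add]; push_cast; omega
            · rw [htd]; simp only [Prod.snd_add]; push_cast; omega
            · have e1 : @Term.realize (LA A) (ℤ × ℤ) (struc A x) _ w (@Term.func (LA A) _ 1 Dir.west ts) =
                ((@Term.realize (LA A) (ℤ × ℤ) (struc A x) _ w (ts 0)).1 - 1,
                 (@Term.realize (LA A) (ℤ × ℤ) (struc A x) _ w (ts 0)).2) := rfl
              rw [e1, h5 x w]
              apply Prod.ext <;> simp <;> ring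
        | north =>
            refine ⟨i, o + (0, 1), ?_, ?_, ?_, ?_, fun x w => ?_⟩
            · rw [htd]; simp only [Prod.fst_add]; push_cast; omega
            · rw [htd]; simp only [Prod.fst_add]; push_cast; omega
            · rw [htd]; simp only [Prod.snd_add]; push_cast; omega
            · rw [htd]; simp only [Prod.snd_add]; push_cast; omega
            · have e1 : @Term.realize (LA A) (ℤ × ℤ) (struc A x) _ w (@Term.func (LA A) _ 1 Dir.north ts) =
                ((@Term.realize (LA A) (ℤ × ℤ) (struc A x) _ w (ts 0)).1,
                 (@Term.realize (LA A) (ℤ × ℤ) (struc A x) _ w (ts 0)).2 + 1) := rfl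
              rw [e1, h5 x w]
              apply Prod.ext <;> simp <;> ring
        | south =>
            refine ⟨i, o + (0, -1), ?_, ?_, ?_, ?_, fun x w => ?_⟩
            · rw [htd]; simp only [Prod.fst_add]; push_cast; omega
            · rw [htd]; simp only [Prod.fst_add]; push_cast; omega
            · rw [htd]; simp only [Prod.snd_add]; push_cast; omega
            · rw [htd]; simp only [Prod.snd_add]; push_cast; omega
            · have e1 : @Term.realize (LA A) (ℤ × ℤ) (struc A x) _ w (@Term.func (LA A) _ 1 Dir.south ts) =
                ((@Term.realize (LA A) (ℤ × ℤ) (struc A x) _ w (ts 0)).1,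
                 (@Term.realize (LA A) (ℤ × ℤ) (struc A x) _ w (ts 0)).2 - 1) := rfl
              rw [e1, h5 x w]
              apply Prod.ext <;> simp <;> ring

/-! ### The main transfer lemma -/

open FirstOrder.Language in
def Rz {A : Type} (x : ℤ × ℤ → A) {m : ℕ} (ψ : (LA A).BoundedFormula Empty m)
    (a : Fin m → ℤ × ℤ) : Prop :=
  @BoundedFormula.Realize (LA A) (ℤ × ℤ) (struc A x) Empty m ψ default a

open FirstOrder.Language in
lemma main_transfer {A : Type} [Fintype A] [Nonempty A] {R k : ℕ} {x y : ℤ × ℤ → A}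
    (hxy : EquivNK (2 * R + 1) k x y) {m : ℕ} (ψ : (LA A).BoundedFormula Empty m) :
    ∀ r : ℕ, rad ψ ≤ r → r ≤ R → (m + r) * (2 * (2 * R) + 1) ^ 2 < k →
    ∀ a b : Fin m → ℤ × ℤ, Good r x y a b → (Rz x ψ a ↔ Rz y ψ b) := by
  induction ψ with
  | falsum =>
      intro r _ _ _ a b _
      exact Iff.rfl
  | @equal m t₁ t₂ =>
      intro r h1 h2 h3 a b hG
      obtain ⟨i₁, o₁, p1, p2, p3, p4, hre₁⟩ := term_shape t₁
      obtain ⟨i₂, o₂, q1, q2, q3, q4, hre₂⟩ := term_shape t₂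
      have hrad : max (td t₁) (td t₂) + 1 ≤ r := h1
      have key : ∀ (z : ℤ × ℤ → A) (p : Fin m → ℤ × ℤ),
          Rz z (BoundedFormula.equal t₁ t₂) p ↔ (p i₁ + o₁ = p i₂ + o₂) := by
        intro z p
        have e0 : Rz z (BoundedFormula.equal t₁ t₂) p ↔
            (@Term.realize (LA A) (ℤ × ℤ) (struc A z) _ (Sum.elim (default : Empty → ℤ × ℤ) p) t₁
            = @Term.realize (LA A) (ℤ × ℤ) (struc A z) _ (Sum.elim default p) t₂) := Iff.rfl
        rw [e0, hre₁ z _, hre₂ z _]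
        exact Iff.rfl
      rw [key x a, key y b]
      rcases hG.2 i₁ i₂ with heq | ⟨hf1, hf2⟩
      · rw [sub_eq_comp] at heq
        constructor <;> intro h <;> rw [Prod.ext_iff] at h <;> apply Prod.ext <;>
          simp only [Prod.fst_add, Prod.snd_add] at * <;> omega
      · constructor <;> intro h <;> exfalso
        · apply hf1
          rw [Prod.ext_iff] at h
          rw [nr_iff]
          simp only [Prod.fst_add, Prod.snd_add] at *
          push_cast at *
          omega
        · apply hf2
          rw [Prod.ext_iff] at h
          rw [nr_iff]
          simp only [Prod.fst_add, Prod.snd_add] at *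
          push_cast at *
          omega
  | @rel m l Rl ts =>
      revert Rl ts
      match l with
      | 0 => intro Rl _; exact Empty.elim Rl
      | (l + 2) => intro Rl _; exact Empty.elim Rl
      | 1 =>
        intro Rl ts
        intro r h1 h2 h3 a b hG
        obtain ⟨i, o, p1, p2, p3, p4, hre⟩ := term_shape (ts 0)
        have hle : td (ts 0) ≤ Finset.univ.sup (fun i => td (ts i)) :=
          Finset.le_sup (f := fun i => td (ts i)) (Finset.mem_univ (0 : Fin 1))
        have hrad : (Finset.univ.sup fun i => td (ts i)) + 1 ≤ r := h1
        have key : ∀ (z : ℤ × ℤ → A) (p : Fin m → ℤ × ℤ),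
            Rz z (BoundedFormula.rel Rl ts) p ↔ (z (p i + o) = Rl) := by
          intro z p
          have e0 : Rz z (BoundedFormula.rel Rl ts) p ↔
              (z (@Term.realize (LA A) (ℤ × ℤ) (struc A z) _
                (Sum.elim (default : Empty → ℤ × ℤ) p) (ts 0)) = Rl) := Iff.rfl
          rw [e0, hre z _]
          exact Iff.rfl
        rw [key x a, key y b]
        have ho : inSq r o := by
          rw [inSq_iff]; push_cast at *; omega
        rw [hG.1 i o ho]
  | @imp m f g ihf ihg =>
      intro r h1 h2 h3 a b hG
      have hrf : rad f ≤ r := le_trans (le_max_left _ _) h1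
      have hrg : rad g ≤ r := le_trans (le_max_right _ _) h1
      have e0 : ∀ (z : ℤ × ℤ → A) (p : Fin m → ℤ × ℤ),
          Rz z (f.imp g) p ↔ (Rz z f p → Rz z g p) := fun z p => Iff.rfl
      rw [e0 x a, e0 y b, ihf r hrf h2 h3 a b hG, ihg r hrg h2 h3 a b hG]
  | @all m f ihf =>
      intro r h1 h2 h3 a b hG
      set r' := rad f with hr'
      have hr'1 : 1 ≤ r' := rad_pos f
      have h3r : 3 * r' ≤ r := h1
      have hr'R : r' ≤ R := by omega
      have hsq : (2 * (2 * r') + 1) ^ 2 ≤ (2 * (2 * R) + 1) ^ 2 :=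
        Nat.pow_le_pow_left (by omega) 2
      have hkc : m * (2 * (2 * r') + 1) ^ 2 < k :=
        lt_of_le_of_lt (Nat.mul_le_mul (by omega) hsq) h3
      have hkc' : (m + 1 + r') * (2 * (2 * R) + 1) ^ 2 < k :=
        lt_of_le_of_lt (Nat.mul_le_mul_right _ (by omega)) h3
      have e0 : ∀ (z : ℤ × ℤ → A) (p : Fin m → ℤ × ℤ),
          Rz z f.all p ↔ ∀ c : ℤ × ℤ, Rz z f (Fin.snoc p c) := fun z p => by
        letI := struc A z
        exact BoundedFormula.realize_all
      rw [e0 x a, e0 y b]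
      constructor
      · intro hx d
        obtain ⟨c, hGc⟩ := extend hr'1 h3r (le_trans h2 le_rfl) hkc (equivnk_symm hxy)
          (good_symm hG) d
        exact (ihf r' le_rfl hr'R hkc' _ _ (good_symm hGc)).mp (hx c)
      · intro hy c
        obtain ⟨d, hGd⟩ := extend hr'1 h3r (le_trans h2 le_rfl) hkc hxy hG c
        exact (ihf r' le_rfl hr'R hkc' _ _ hGd).mpr (hy d)

/-- For every `L_A`-sentence `φ` there are `n, k ≥ 1` such that `X_φ` is a
union of `∼_(n,k)`-equivalence classes. -/
theorem exists_nk_union_of_classes {A : Type} [Fintype A] [Nonempty A]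
    (φ : (LA A).Sentence) :
    ∃ n k : ℕ, 1 ≤ n ∧ 1 ≤ k ∧
      ∀ x y : ℤ × ℤ → A, EquivNK n k x y → (Models x φ ↔ Models y φ) := by
  refine ⟨2 * rad φ + 1, (0 + rad φ) * (2 * (2 * rad φ) + 1) ^ 2 + 1, by omega, by omega, ?_⟩
  intro x y hxy
  have hG : Good (rad φ) x y (default : Fin 0 → ℤ × ℤ) default :=
    ⟨fun i => i.elim0, fun i => i.elim0⟩
  have e : ∀ z : ℤ × ℤ → A, Models z φ ↔ Rz z φ default := by
    intro z
    unfold Models Rz FirstOrder.Language.Sentence.Realize FirstOrder.Language.Formula.Realize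
    constructor <;> intro h <;> convert h using 2 <;>
      exact Subsingleton.elim _ _
  rw [e x, e y]
  exact main_transfer hxy φ (rad φ) le_rfl le_rfl (by omega) default default hG
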